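/- Let n ≥ 2, let p ∈ (0,1), and let k be an integer with 1 ≤ k ≤ n satisfying (n−1)p ≤ k < 1 + (n−1)p. Then the maximum of P_θ(∑_{i=1}^n c_i ≥ k) over all pairwise independent distributions θ with all marginal probabilities equal to p equals ( (n−1)(1−p) + k )·p / k, and this maximum is attained by some such distribution θ. -/

import Mathlib

open Finset

noncomputable section

/-- Probability that at least `k` of the `n` coordinates equal `1` under the pmf `θ` on `{0,1}^n`. -/
def probGE (n : ℕ) (θ : (Fin n → Bool) → ℝ) (k : ℕ) : ℝ :=
  ∑ c ∈ Finset.univ.filter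
      (fun c : Fin n → Bool => k ≤ (Finset.univ.filter (fun i => c i = true)).card), θ c

/-- Probability that all `n` coordinates equal `1` under the pmf `θ` on `{0,1}^n`. -/
def probAll (n : ℕ) (θ : (Fin n → Bool) → ℝ) : ℝ :=
  ∑ c ∈ Finset.univ.filter (fun c : Fin n → Bool => ∀ i, c i = true), θ c

/-- `θ` is a probability mass function on `{0,1}^n`. -/
def IsDist (n : ℕ) (θ : (Fin n → Bool) → ℝ) : Prop :=
  (∀ c, 0 ≤ θ c) ∧ (∑ c, θ c = 1)

/-- Univariate marginal probability `P_θ(c_i = 1)`. -/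
def Marg (n : ℕ) (θ : (Fin n → Bool) → ℝ) (i : Fin n) : ℝ :=
  ∑ c ∈ Finset.univ.filter (fun c : Fin n → Bool => c i = true), θ c

/-- Bivariate probability `P_θ(c_i = 1, c_j = 1)`. -/
def Biv (n : ℕ) (θ : (Fin n → Bool) → ℝ) (i j : Fin n) : ℝ :=
  ∑ c ∈ Finset.univ.filter (fun c : Fin n → Bool => c i = true ∧ c j = true), θ c

/-- `θ` is a pairwise independent distribution with marginal vector `p`. -/
def PairwiseIndep (n : ℕ) (p : Fin n → ℝ) (θ : (Fin n → Bool) → ℝ) : Prop :=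
  IsDist n θ ∧ (∀ i, Marg n θ i = p i) ∧
    (∀ i j : Fin n, i < j → Biv n θ i j = p i * p j)

/-! ### Auxiliary lemmas -/

lemma count_one (n k : ℕ) (hk : 1 ≤ k) (i : Fin n) :
    ((univ : Finset (Finset (Fin n))).filter fun S => S.card = k ∧ i ∈ S).card
      = (n-1).choose (k-1) := by
  have : ((univ : Finset (Finset (Fin n))).filter fun S => S.card = k ∧ i ∈ S).card
      = (powersetCard (k-1) (univ.erase i)).card := by
    apply Finset.card_nbij' (fun S => S.erase i) (fun A => insert i A)
    · intro S hS
      simp only [mem_coe, mem_filter, mem_univ, true_and] at hS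
      simp only [mem_coe, mem_powersetCard]
      constructor
      · intro x hx; simp only [mem_erase] at hx ⊢; exact ⟨hx.1, mem_univ _⟩
      · rw [card_erase_of_mem hS.2, hS.1]
    · intro A hA
      simp only [mem_coe, mem_powersetCard] at hA
      have hiA : i ∉ A := fun h => by simpa using (hA.1 h)
      simp only [mem_coe, mem_filter, mem_univ, true_and]
      exact ⟨by rw [card_insert_of_notMem hiA, hA.2]; omega, mem_insert_self _ _⟩
    · intro S hS
      simp only [mem_coe, mem_filter, mem_univ, true_and] at hS
      exact insert_erase hS.2
    · intro A hA
      simp only [mem_coe, mem_powersetCard] at hA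
      have hiA : i ∉ A := fun h => by simpa using (hA.1 h)
      exact erase_insert hiA
  rw [this, card_powersetCard, card_erase_of_mem (mem_univ i), card_univ, Fintype.card_fin]

lemma count_two (n k : ℕ) (hk : 2 ≤ k) (i j : Fin n) (hij : i ≠ j) :
    ((univ : Finset (Finset (Fin n))).filter fun S => S.card = k ∧ i ∈ S ∧ j ∈ S).card
      = (n-2).choose (k-2) := by
  have : ((univ : Finset (Finset (Fin n))).filter fun S => S.card = k ∧ i ∈ S ∧ j ∈ S).card
      = (powersetCard (k-2) ((univ.erase i).erase j)).card := by
    apply Finset.card_nbij' (fun S => (S.erase i).erase j) (fun A => insert i (insert j A))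
    · intro S hS
      simp only [mem_coe, mem_filter, mem_univ, true_and] at hS
      simp only [mem_coe, mem_powersetCard]
      constructor
      · intro x hx; simp only [mem_erase] at hx ⊢
        exact ⟨hx.1, hx.2.1, mem_univ _⟩
      · rw [card_erase_of_mem (by simp [mem_erase, hS.2.2, Ne.symm hij]),
          card_erase_of_mem hS.2.1, hS.1]
        omega
    · intro A hA
      simp only [mem_coe, mem_powersetCard] at hA
      have hjA : j ∉ A := fun h => by simpa using (hA.1 h)
      have hiA : i ∉ A := fun h => by simpa [hij] using hA.1 h
      simp only [mem_coe, mem_filter, mem_univ, true_and]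
      refine ⟨?_, mem_insert_self _ _, mem_insert_of_mem (mem_insert_self _ _)⟩
      rw [card_insert_of_notMem (by simp [hiA, hij]), card_insert_of_notMem hjA, hA.2]
      omega
    · intro S hS
      simp only [mem_coe, mem_filter, mem_univ, true_and] at hS
      beta_reduce
      rw [insert_erase (by simp [mem_erase, hS.2.2, Ne.symm hij]), insert_erase hS.2.1]
    · intro A hA
      simp only [mem_coe, mem_powersetCard] at hA
      have hjA : j ∉ A := fun h => by simpa using (hA.1 h)
      have hiA : i ∉ A := fun h => by simpa [hij] using hA.1 h
      beta_reduce
      rw [erase_insert (by simp [hiA, hij]), erase_insert hjA]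
  rw [this, card_powersetCard, card_erase_of_mem (by simp [Ne.symm hij]),
    card_erase_of_mem (mem_univ i), card_univ, Fintype.card_fin, Nat.sub_sub]

lemma count_k (n k : ℕ) :
    ((univ : Finset (Finset (Fin n))).filter fun S => S.card = k).card = n.choose k := by
  have h : (univ : Finset (Finset (Fin n))).filter (fun S => S.card = k)
      = powersetCard k univ := by
    rw [powersetCard_eq_filter, powerset_univ]
  rw [h, card_powersetCard, card_univ, Fintype.card_fin]

lemma sum_theta0 (n k : ℕ) (hk1 : 1 ≤ k) (hkn : k < n) (qn qk q0 : ℝ)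
    (P : Finset (Fin n) → Prop) [DecidablePred P] (hPu : P univ) :
    ∑ S ∈ univ.filter P,
        (if S = univ then qn else if S.card = k then qk else if S = ∅ then q0 else 0)
      = qn + ((univ.filter fun S => S.card = k ∧ P S).card : ℝ) * qk
        + (if P ∅ then q0 else 0) := by
  have hne : (univ : Finset (Fin n)) ≠ ∅ := by
    intro h
    have := congrArg Finset.card h
    simp [Fintype.card_fin] at this
    omega
  have hdecomp : ∀ S : Finset (Fin n),
      (if S = univ then qn else if S.card = k then qk else if S = ∅ then q0 else 0)
        = (if S = univ then qn else 0) + (if S.card = k then qk else 0)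
          + (if S = ∅ then q0 else 0) := by
    intro S
    by_cases h1 : S = univ
    · have : S.card ≠ k := by rw [h1, card_univ, Fintype.card_fin]; omega
      subst h1
      simp [hne]
      exact fun h => absurd h (by omega)
    · by_cases h2 : S.card = k
      · have : S ≠ ∅ := by intro h; rw [h] at h2; simp at h2; omega
        simp [h1, h2, this]
      · by_cases h3 : S = ∅
        · subst h3
          simp only [Ne.symm hne, card_empty, if_false, eq_self_iff_true, if_true,
            iff_false, if_neg h1]
          simp only [show ¬ ((0:ℕ) = k) by omega, if_false]
          ring
        · simp [h1, h2, h3]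
  rw [Finset.sum_congr rfl (fun S _ => hdecomp S), Finset.sum_add_distrib,
    Finset.sum_add_distrib]
  congr 1
  congr 1
  · rw [Finset.sum_ite_eq' (univ.filter P) univ (fun _ => qn), if_pos (by simp [hPu])]
  · rw [Finset.sum_filter]
    have : ∀ S : Finset (Fin n),
        (if P S then (if S.card = k then qk else 0) else 0)
          = if S.card = k ∧ P S then qk else 0 := by
      intro S; by_cases h1 : P S <;> by_cases h2 : S.card = k <;> simp [h1, h2]
    rw [Finset.sum_congr rfl (fun S _ => this S), ← Finset.sum_filter,
      Finset.sum_const, nsmul_eq_mul]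
  · rw [Finset.sum_ite_eq' (univ.filter P) ∅ (fun _ => q0)]
    simp

lemma sum_transfer (n : ℕ) (g : Finset (Fin n) → ℝ) :
    ∑ c : Fin n → Bool, g (univ.filter fun i => c i = true) = ∑ S : Finset (Fin n), g S := by
  have hbij : Function.Bijective (fun (S : Finset (Fin n)) => fun i => decide (i ∈ S)) := by
    rw [Function.bijective_iff_has_inverse]
    refine ⟨fun c => univ.filter fun i => c i = true, fun S => ?_, fun c => ?_⟩
    · ext i; simp
    · funext i; by_cases h : c i = true <;> simp [h]
  refine (Fintype.sum_bijective _ hbij g (fun c => g (univ.filter fun i => c i = true)) ?_).symm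
  intro S
  congr 1
  ext i; simp

lemma sum_transfer_pred (n : ℕ) (g : Finset (Fin n) → ℝ)
    (P : Finset (Fin n) → Prop) [DecidablePred P]
    (Pc : (Fin n → Bool) → Prop) [DecidablePred Pc]
    (h : ∀ c, Pc c ↔ P (univ.filter fun i => c i = true)) :
    ∑ c ∈ univ.filter Pc, g (univ.filter fun i => c i = true) = ∑ S ∈ univ.filter P, g S := by
  rw [Finset.sum_filter, Finset.sum_filter]
  rw [show (∑ c : Fin n → Bool, if Pc c then g (univ.filter fun i => c i = true) else 0)
      = ∑ c : Fin n → Bool,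
          (fun S => if P S then g S else 0) (univ.filter fun i => c i = true) from
    Finset.sum_congr rfl fun c _ => by
      by_cases hc : Pc c
      · have h2 := (h c).mp hc
        simp [hc, h2]
      · have h2 : ¬ P (univ.filter fun i => c i = true) := fun hP => hc ((h c).mpr hP)
        simp [hc, h2]]
  exact sum_transfer n (fun S => if P S then g S else 0)

lemma first_moment (n : ℕ) (p : ℝ) (θ : (Fin n → Bool) → ℝ)
    (hmarg : ∀ i, Marg n θ i = p) :
    ∑ c : Fin n → Bool, θ c * ((univ.filter fun i => c i = true).card : ℝ) = n * p := by
  have hs : ∀ c : Fin n → Bool,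
      ((univ.filter fun i => c i = true).card : ℝ)
        = ∑ i : Fin n, (if c i = true then (1:ℝ) else 0) := by
    intro c
    rw [Finset.card_filter, Nat.cast_sum]
    exact Finset.sum_congr rfl fun i _ => by split <;> simp
  calc ∑ c : Fin n → Bool, θ c * ((univ.filter fun i => c i = true).card : ℝ)
      = ∑ c : Fin n → Bool, ∑ i : Fin n, (if c i = true then θ c else 0) := by
        refine Finset.sum_congr rfl fun c _ => ?_
        rw [hs c, Finset.mul_sum]
        exact Finset.sum_congr rfl fun i _ => by split <;> simp
    _ = ∑ i : Fin n, ∑ c : Fin n → Bool, (if c i = true then θ c else 0) := Finset.sum_comm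
    _ = ∑ i : Fin n, Marg n θ i := by
        refine Finset.sum_congr rfl fun i _ => ?_
        rw [Marg, Finset.sum_filter]
    _ = n * p := by rw [Finset.sum_congr rfl fun i _ => hmarg i]; simp [mul_comm]

lemma second_moment (n : ℕ) (p : ℝ) (θ : (Fin n → Bool) → ℝ)
    (hmarg : ∀ i, Marg n θ i = p)
    (hB : ∀ i j : Fin n, i ≠ j →
      (∑ c ∈ univ.filter (fun c : Fin n → Bool => c i = true ∧ c j = true), θ c) = p * p) :
    ∑ c : Fin n → Bool, θ c * ((univ.filter fun i => c i = true).card : ℝ)^2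
      = n * p + n * ((n:ℝ) - 1) * p^2 := by
  have hs : ∀ c : Fin n → Bool,
      ((univ.filter fun i => c i = true).card : ℝ)
        = ∑ i : Fin n, (if c i = true then (1:ℝ) else 0) := by
    intro c
    rw [Finset.card_filter, Nat.cast_sum]
    exact Finset.sum_congr rfl fun i _ => by split <;> simp
  calc ∑ c : Fin n → Bool, θ c * ((univ.filter fun i => c i = true).card : ℝ)^2
      = ∑ c : Fin n → Bool, ∑ i : Fin n, ∑ j : Fin n,
          (if c i = true ∧ c j = true then θ c else 0) := by
        refine Finset.sum_congr rfl fun c _ => ?_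
        rw [hs c, sq, Finset.sum_mul_sum, Finset.mul_sum]
        refine Finset.sum_congr rfl fun i _ => ?_
        rw [Finset.mul_sum]
        refine Finset.sum_congr rfl fun j _ => ?_
        by_cases h1 : c i = true <;> by_cases h2 : c j = true <;> simp [h1, h2]
    _ = ∑ i : Fin n, ∑ j : Fin n, ∑ c : Fin n → Bool,
          (if c i = true ∧ c j = true then θ c else 0) := by
        rw [Finset.sum_comm]
        exact Finset.sum_congr rfl fun i _ => Finset.sum_comm
    _ = ∑ i : Fin n, ∑ j : Fin n, (if i = j then p else p * p) := by
        refine Finset.sum_congr rfl fun i _ => Finset.sum_congr rfl fun j _ => ?_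
        rw [← Finset.sum_filter]
        by_cases h : i = j
        · subst h
          rw [if_pos rfl, ← hmarg i, Marg]
          exact Finset.sum_congr (by ext c; simp) fun _ _ => rfl
        · rw [if_neg h]; exact hB i j h
    _ = n * p + n * ((n:ℝ) - 1) * p^2 := by
        have : ∀ i : Fin n, ∑ j : Fin n, (if i = j then p else p * p)
            = p - p * p + n * (p * p) := by
          intro i
          have : ∀ j : Fin n, (if i = j then p else p * p)
              = (if i = j then p - p * p else 0) + p * p := by
            intro j; split <;> ring
          rw [Finset.sum_congr rfl fun j _ => this j, Finset.sum_add_distrib,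
            Finset.sum_ite_eq univ i (fun _ => p - p * p), if_pos (mem_univ i),
            Finset.sum_const, card_univ, Fintype.card_fin, nsmul_eq_mul]
        rw [Finset.sum_congr rfl fun i _ => this i, Finset.sum_const, card_univ,
          Fintype.card_fin, nsmul_eq_mul]
        ring

lemma upper_bound (n k : ℕ) (hn : 2 ≤ n) (hk1 : 1 ≤ k) (p : ℝ)
    (θ : (Fin n → Bool) → ℝ) (hpos : ∀ c, 0 ≤ θ c) (hsum : ∑ c, θ c = 1)
    (hmarg : ∀ i, Marg n θ i = p)
    (hB : ∀ i j : Fin n, i ≠ j →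
      (∑ c ∈ univ.filter (fun c : Fin n → Bool => c i = true ∧ c j = true), θ c) = p * p) :
    probGE n θ k ≤ (((n : ℝ) - 1) * (1 - p) + (k : ℝ)) * p / (k : ℝ) := by
  have hn0 : (0:ℝ) < n := by positivity
  have hk0 : (0:ℝ) < k := by exact_mod_cast hk1
  let s : (Fin n → Bool) → ℝ := fun c => ((univ.filter fun i => c i = true).card : ℝ)
  have hs0 : ∀ c, 0 ≤ s c := fun c => Nat.cast_nonneg _
  have hsn : ∀ c, s c ≤ n := by
    intro c
    have : (univ.filter fun i => c i = true).card ≤ n := by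
      refine le_trans (Finset.card_filter_le _ _) ?_
      rw [card_univ, Fintype.card_fin]
    show ((univ.filter fun i => c i = true).card : ℝ) ≤ (n:ℝ)
    exact_mod_cast this
  have key : probGE n θ k
      ≤ ∑ c : Fin n → Bool, θ c * (1 + (s c - k) * (n - s c) / (n * k)) := by
    rw [probGE, Finset.sum_filter]
    refine Finset.sum_le_sum fun c _ => ?_
    by_cases h : k ≤ (Finset.univ.filter (fun i => c i = true)).card
    · rw [if_pos h]
      have hks : (k:ℝ) ≤ s c := by
        show (k:ℝ) ≤ ((univ.filter fun i => c i = true).card : ℝ)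
        exact_mod_cast h
      have h1 : 0 ≤ (s c - k) * (n - s c) / (n * k) :=
        div_nonneg (mul_nonneg (by linarith) (by linarith [hsn c])) (by positivity)
      nlinarith [mul_nonneg (hpos c) h1]
    · rw [if_neg h]
      have hks : s c < (k:ℝ) := by
        show ((univ.filter fun i => c i = true).card : ℝ) < (k:ℝ)
        exact_mod_cast lt_of_not_ge h
      have h1 : -((s c - k) * (n - s c)) ≤ n * k := by
        nlinarith [hs0 c, hsn c]
      have h2 : (0:ℝ) ≤ 1 + (s c - k) * (n - s c) / (n * k) := by
        have := (div_le_one (show (0:ℝ) < n * k by positivity)).mpr h1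
        rw [neg_div] at this
        linarith
      exact mul_nonneg (hpos c) h2
  refine key.trans ?_
  have expand : ∀ c : Fin n → Bool, θ c * (1 + (s c - k) * (n - s c) / (n * k))
      = θ c + ((((n:ℝ) + k) * (θ c * s c) - θ c * (s c)^2 - (n * k) * θ c) / (n * k)) := by
    intro c
    field_simp
    ring
  rw [Finset.sum_congr rfl fun c _ => expand c, Finset.sum_add_distrib, hsum,
    ← Finset.sum_div]
  have E1 := first_moment n p θ hmarg
  have E2 := second_moment n p θ hmarg hB
  have hsums : ∑ c : Fin n → Bool, (((n:ℝ) + k) * (θ c * s c) - θ c * (s c)^2 - (n * k) * θ c)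
      = ((n:ℝ) + k) * (n * p) - (n * p + n * ((n:ℝ) - 1) * p^2) - n * k := by
    rw [Finset.sum_sub_distrib, Finset.sum_sub_distrib, ← Finset.mul_sum, ← Finset.mul_sum,
      E1, E2, hsum, mul_one]
  rw [hsums]
  have heq : (1:ℝ) + (((n:ℝ) + k) * (n * p) - (n * p + n * ((n:ℝ) - 1) * p^2) - n * k) / (n * k)
      = (((n : ℝ) - 1) * (1 - p) + (k : ℝ)) * p / (k : ℝ) := by
    field_simp
    ring
  exact le_of_eq heq

noncomputable def gfun (n k : ℕ) (p : ℝ) : Finset (Fin n) → ℝ := fun S =>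
  if S = univ then p * (((n:ℝ) - 1) * p - (k:ℝ) + 1) / ((n:ℝ) - (k:ℝ))
  else if S.card = k then
    ((n:ℝ) * ((n:ℝ) - 1) * p * (1 - p) / ((k:ℝ) * ((n:ℝ) - (k:ℝ)))) / (n.choose k : ℝ)
  else if S = ∅ then (1 - p) * ((k:ℝ) - ((n:ℝ) - 1) * p) / (k:ℝ)
  else 0

noncomputable def thetaw (n k : ℕ) (p : ℝ) : (Fin n → Bool) → ℝ := fun c =>
  gfun n k p (univ.filter fun i => c i = true)

-- choose identities
lemma choose_id1 (n k : ℕ) (hn : 1 ≤ n) (hk : 1 ≤ k) :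
    n * (n-1).choose (k-1) = n.choose k * k := by
  obtain ⟨m, rfl⟩ : ∃ m, n = m + 1 := ⟨n - 1, by omega⟩
  obtain ⟨l, rfl⟩ : ∃ l, k = l + 1 := ⟨k - 1, by omega⟩
  simpa using Nat.add_one_mul_choose_eq m l

lemma choose_id2 (n k : ℕ) (hn : 2 ≤ n) (hk : 2 ≤ k) :
    n * (n-1) * (n-2).choose (k-2) = n.choose k * k * (k-1) := by
  obtain ⟨m, rfl⟩ : ∃ m, n = m + 2 := ⟨n - 2, by omega⟩
  obtain ⟨l, rfl⟩ : ∃ l, k = l + 2 := ⟨k - 2, by omega⟩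
  have A := Nat.add_one_mul_choose_eq (m+1) (l+1)
  have B := Nat.add_one_mul_choose_eq m l
  rw [show m+1+1 = m+2 from rfl, show l+1+1 = l+2 from rfl] at A
  have : (m+2) * ((m+1) * Nat.choose m l) = ((m+2).choose (l+2) * (l+2)) * (l+1) := by
    rw [B, show (m+2) * (Nat.choose (m+1) (l+1) * (l+1)) = ((m+2) * Nat.choose (m+1) (l+1)) * (l+1) by ring, A]
  simp only [show m+2-1 = m+1 by omega, show m+2-2 = m by omega,
    show l+2-2 = l by omega, show l+2-1 = l+1 by omega]
  calc (m+2) * (m+1) * Nat.choose m l = (m+2) * ((m+1) * Nat.choose m l) := by ring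
    _ = ((m+2).choose (l+2) * (l+2)) * (l+1) := this
    _ = (m+2).choose (l+2) * (l+2) * (l+1) := by ring


lemma mem_value (n k : ℕ) (hn : 2 ≤ n) (hk1 : 1 ≤ k) (hkn : k < n) (p : ℝ)
    (hp0 : 0 < p) (hp1 : p < 1)
    (hk1' : ((n:ℝ)-1)*p ≤ k) (hk2' : (k:ℝ) < 1 + ((n:ℝ)-1)*p) :
    (∀ c, 0 ≤ thetaw n k p c) ∧ (∑ c, thetaw n k p c = 1) ∧
    (∀ i, Marg n (thetaw n k p) i = p) ∧
    (∀ i j : Fin n, i ≠ j → Biv n (thetaw n k p) i j = p * p) ∧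
    probGE n (thetaw n k p) k = (((n:ℝ)-1)*(1-p)+(k:ℝ))*p/(k:ℝ) := by
  have hn0 : (0:ℝ) < n := by positivity
  have hn2 : (2:ℝ) ≤ (n:ℝ) := by exact_mod_cast hn
  have hn1 : (0:ℝ) < (n:ℝ) - 1 := by linarith
  have hk0 : (0:ℝ) < (k:ℝ) := by exact_mod_cast hk1
  have hknR : (k:ℝ) < (n:ℝ) := by exact_mod_cast hkn
  have hnk : (0:ℝ) < (n:ℝ) - (k:ℝ) := by linarith
  have hC0 : (0:ℝ) < (n.choose k : ℝ) := by exact_mod_cast Nat.choose_pos (le_of_lt hkn)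
  set A : ℝ := p * (((n:ℝ) - 1) * p - (k:ℝ) + 1) / ((n:ℝ) - (k:ℝ)) with hA
  set B : ℝ := ((n:ℝ) * ((n:ℝ) - 1) * p * (1 - p) / ((k:ℝ) * ((n:ℝ) - (k:ℝ))))
      / (n.choose k : ℝ) with hB
  set Cq : ℝ := (1 - p) * ((k:ℝ) - ((n:ℝ) - 1) * p) / (k:ℝ) with hCq
  have hgfun : ∀ S : Finset (Fin n), gfun n k p S
      = (if S = univ then A else if S.card = k then B else if S = ∅ then Cq else 0) := by
    intro S; rw [gfun]
  have hcast1 : (n:ℝ) * ((n-1).choose (k-1):ℝ) = (n.choose k:ℝ) * (k:ℝ) := by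
    exact_mod_cast choose_id1 n k (by omega) hk1
  refine ⟨?_, ?_, ?_, ?_, ?_⟩
  · -- nonneg
    intro c
    rw [thetaw, hgfun]
    split
    · exact div_nonneg (mul_nonneg hp0.le (by linarith)) hnk.le
    split
    · refine div_nonneg (div_nonneg ?_ (by positivity)) hC0.le
      exact mul_nonneg (mul_nonneg (mul_nonneg (by linarith) (by linarith)) hp0.le)
        (by linarith)
    split
    · exact div_nonneg (mul_nonneg (by linarith) (by linarith)) hk0.le
    · exact le_refl 0
  · -- total mass
    calc ∑ c, thetaw n k p c
        = ∑ S ∈ univ.filter (fun _ : Finset (Fin n) => True),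
            (if S = univ then A else if S.card = k then B else if S = ∅ then Cq else 0) := by
          rw [Finset.filter_true]
          rw [show (∑ c, thetaw n k p c)
              = ∑ c : Fin n → Bool, gfun n k p (univ.filter fun i => c i = true) from rfl]
          rw [sum_transfer n (gfun n k p)]
          exact Finset.sum_congr rfl fun S _ => hgfun S
      _ = A + (((univ : Finset (Finset (Fin n))).filter
            fun S => S.card = k ∧ True).card : ℝ) * B + (if True then Cq else 0) :=
          sum_theta0 n k hk1 hkn A B Cq _ trivial
      _ = 1 := by
          simp only [and_true, if_true, count_k n k]
          rw [hA, hB, hCq]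
          field_simp
          ring
  · -- marginals
    intro i
    calc Marg n (thetaw n k p) i
        = ∑ S ∈ univ.filter (fun S : Finset (Fin n) => i ∈ S),
            (if S = univ then A else if S.card = k then B else if S = ∅ then Cq else 0) := by
          rw [Marg]
          rw [show (∑ c ∈ univ.filter (fun c : Fin n → Bool => c i = true), thetaw n k p c)
              = ∑ c ∈ univ.filter (fun c : Fin n → Bool => c i = true),
                  gfun n k p (univ.filter fun i => c i = true) from rfl]
          rw [sum_transfer_pred n (gfun n k p) (fun S => i ∈ S)
            (fun c => c i = true) (fun c => by simp)]
          exact Finset.sum_congr rfl fun S _ => hgfun S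
      _ = A + (((univ : Finset (Finset (Fin n))).filter
            fun S => S.card = k ∧ i ∈ S).card : ℝ) * B + (if i ∈ (∅ : Finset (Fin n)) then Cq else 0) :=
          sum_theta0 n k hk1 hkn A B Cq _ (mem_univ i)
      _ = p := by
          rw [count_one n k hk1 i, if_neg (notMem_empty i)]
          have hx : ((n-1).choose (k-1):ℝ) = (n.choose k:ℝ) * (k:ℝ) / (n:ℝ) := by
            field_simp
            linarith [hcast1]
          rw [hx, hA, hB]
          field_simp
          ring
  · -- bivariate
    intro i j hij
    have step : Biv n (thetaw n k p) i j
        = A + (((univ : Finset (Finset (Fin n))).filter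
            fun S => S.card = k ∧ i ∈ S ∧ j ∈ S).card : ℝ) * B + 0 := by
      calc Biv n (thetaw n k p) i j
          = ∑ S ∈ univ.filter (fun S : Finset (Fin n) => i ∈ S ∧ j ∈ S),
              (if S = univ then A else if S.card = k then B else if S = ∅ then Cq else 0) := by
            rw [Biv]
            rw [show (∑ c ∈ univ.filter (fun c : Fin n → Bool => c i = true ∧ c j = true),
                  thetaw n k p c)
                = ∑ c ∈ univ.filter (fun c : Fin n → Bool => c i = true ∧ c j = true),
                    gfun n k p (univ.filter fun i => c i = true) from rfl]
            rw [sum_transfer_pred n (gfun n k p) (fun S => i ∈ S ∧ j ∈ S)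
              (fun c => c i = true ∧ c j = true) (fun c => by simp)]
            exact Finset.sum_congr rfl fun S _ => hgfun S
        _ = A + (((univ : Finset (Finset (Fin n))).filter
              fun S => S.card = k ∧ i ∈ S ∧ j ∈ S).card : ℝ) * B
            + (if i ∈ (∅ : Finset (Fin n)) ∧ j ∈ (∅ : Finset (Fin n)) then Cq else 0) :=
            sum_theta0 n k hk1 hkn A B Cq _ ⟨mem_univ i, mem_univ j⟩
        _ = _ := by rw [if_neg (fun h => notMem_empty i h.1)]
    rw [step, add_zero]
    by_cases hk2 : 2 ≤ k
    · rw [count_two n k hk2 i j hij]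
      have hcast2 : (n:ℝ) * ((n:ℝ)-1) * ((n-2).choose (k-2):ℝ)
          = (n.choose k:ℝ) * (k:ℝ) * ((k:ℝ)-1) := by
        have := choose_id2 n k hn hk2
        have h2 : ((n * (n-1) * (n-2).choose (k-2) : ℕ) : ℝ)
            = ((n.choose k * k * (k-1) : ℕ) : ℝ) := by exact_mod_cast this
        push_cast at h2
        rw [Nat.cast_sub (by omega : 1 ≤ n), Nat.cast_sub (by omega : 1 ≤ k)] at h2
        · push_cast at h2
          linarith [h2]
      have hx : ((n-2).choose (k-2):ℝ)
          = (n.choose k:ℝ) * (k:ℝ) * ((k:ℝ)-1) / ((n:ℝ) * ((n:ℝ)-1)) := by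
        field_simp
        linarith [hcast2]
      rw [hx, hA, hB]
      field_simp
      ring
    · have hke : k = 1 := by omega
      subst hke
      have hempty : ((univ : Finset (Finset (Fin n))).filter
          fun S => S.card = 1 ∧ i ∈ S ∧ j ∈ S) = ∅ := by
        rw [Finset.filter_eq_empty_iff]
        rintro S _ ⟨h1, hi, hj⟩
        obtain ⟨x, rfl⟩ := Finset.card_eq_one.mp h1
        simp only [Finset.mem_singleton] at hi hj
        exact hij (hi.trans hj.symm)
      rw [hempty]
      simp only [Finset.card_empty, Nat.cast_zero, zero_mul, add_zero]
      rw [hA]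
      push_cast
      field_simp
      ring
  · -- probGE value
    calc probGE n (thetaw n k p) k
        = ∑ S ∈ univ.filter (fun S : Finset (Fin n) => k ≤ S.card),
            (if S = univ then A else if S.card = k then B else if S = ∅ then Cq else 0) := by
          rw [probGE]
          rw [show (∑ c ∈ univ.filter (fun c : Fin n → Bool =>
                  k ≤ (univ.filter (fun i => c i = true)).card), thetaw n k p c)
              = ∑ c ∈ univ.filter (fun c : Fin n → Bool =>
                  k ≤ (univ.filter (fun i => c i = true)).card),
                  gfun n k p (univ.filter fun i => c i = true) from rfl]
          rw [sum_transfer_pred n (gfun n k p) (fun S => k ≤ S.card)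
            (fun c => k ≤ (univ.filter (fun i => c i = true)).card) (fun c => Iff.rfl)]
          exact Finset.sum_congr rfl fun S _ => hgfun S
      _ = A + (((univ : Finset (Finset (Fin n))).filter
            fun S => S.card = k ∧ k ≤ S.card).card : ℝ) * B
          + (if k ≤ (∅ : Finset (Fin n)).card then Cq else 0) :=
          sum_theta0 n k hk1 hkn A B Cq _ (by rw [card_univ, Fintype.card_fin]; omega)
      _ = (((n:ℝ)-1)*(1-p)+(k:ℝ))*p/(k:ℝ) := by
          have hcc : ((univ : Finset (Finset (Fin n))).filter
              fun S => S.card = k ∧ k ≤ S.card)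
              = ((univ : Finset (Finset (Fin n))).filter fun S => S.card = k) := by
            apply Finset.filter_congr
            intro S _
            exact ⟨fun h => h.1, fun h => ⟨h, le_of_eq h.symm⟩⟩
          rw [hcc, count_k n k, if_neg (by simp; omega)]
          rw [hA, hB]
          field_simp
          ring


theorem stmt_12 (n k : ℕ) (hn : 2 ≤ n) (hk1 : 1 ≤ k) (hkn : k ≤ n)
    (p : ℝ) (hp0 : 0 < p) (hp1 : p < 1)
    (hk1' : ((n : ℝ) - 1) * p ≤ (k : ℝ)) (hk2' : (k : ℝ) < 1 + ((n : ℝ) - 1) * p) :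
    IsGreatest
      {x : ℝ | ∃ θ : (Fin n → Bool) → ℝ,
        PairwiseIndep n (fun _ => p) θ ∧ probGE n θ k = x}
      ((((n : ℝ) - 1) * (1 - p) + (k : ℝ)) * p / (k : ℝ)) := by
  have hknlt : k < n := by
    have hn2 : (2:ℝ) ≤ (n:ℝ) := by exact_mod_cast hn
    have hx : (k:ℝ) < (n:ℝ) := by
      nlinarith [mul_pos (show (0:ℝ) < (n:ℝ)-1 by linarith) (show (0:ℝ) < 1-p by linarith)]
    exact_mod_cast hx
  constructor
  · obtain ⟨hpos, hsum, hmarg, hbiv, hval⟩ := mem_value n k hn hk1 hknlt p hp0 hp1 hk1' hk2'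
    exact ⟨thetaw n k p, ⟨⟨hpos, hsum⟩, fun i => hmarg i,
      fun i j hij => hbiv i j (ne_of_lt hij)⟩, hval⟩
  · rintro x ⟨θ, ⟨⟨hpos, hsum⟩, hmarg, hbiv⟩, rfl⟩
    refine upper_bound n k hn hk1 p θ hpos hsum hmarg ?_
    intro i j hij
    rcases lt_or_gt_of_ne hij with h | h
    · exact hbiv i j h
    · have hj := hbiv j i h
      rw [Biv] at hj
      rw [← hj]
      exact Finset.sum_congr (by ext c; simp [and_comm]) fun _ _ => rfl
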